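/- Let n be a positive multiple of 4 and let M be a perfect matching on {1,...,n}. For the graph G = K_n minus the n/2 edges of M, with XYZ Hamiltonian H(G) = (n(n-1)/2 - n/2)·I - 2·L(G), perfect state transfer occurs at time t = π/4 + π·k/2 between each matched pair {i,j} ∈ M: |[exp(-ι·t·H(G))]_{ij}| = 1. -/

import Mathlib

open NormedSpace in
lemma exp_smul_idem {N : ℕ} (p : Matrix (Fin N) (Fin N) ℂ) (hp : p * p = p) (s : ℂ) :
    exp (s • p) = 1 + (Complex.exp s - 1) • p := by
  letI : SeminormedRing (Matrix (Fin N) (Fin N) ℂ) := Matrix.linftyOpSemiNormedRing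
  letI : NormedRing (Matrix (Fin N) (Fin N) ℂ) := Matrix.linftyOpNormedRing
  letI : NormedAlgebra ℂ (Matrix (Fin N) (Fin N) ℂ) := Matrix.linftyOpNormedAlgebra
  have hpk : ∀ k : ℕ, p ^ (k + 1) = p := by
    intro k; induction k with
    | zero => simp
    | succ k ih => rw [pow_succ, ih, hp]
  have hc : Summable fun k : ℕ => ((Nat.factorial k : ℂ))⁻¹ * s ^ k := by
    simpa [smul_eq_mul] using expSeries_summable' (𝕂 := ℂ) s
  have hc1 : Summable fun k : ℕ => ((Nat.factorial (k+1) : ℂ))⁻¹ * s ^ (k + 1) :=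
    (summable_nat_add_iff (f := fun k => ((Nat.factorial k : ℂ))⁻¹ * s ^ k) 1).mpr hc
  have hes : ∑' k : ℕ, ((Nat.factorial (k+1) : ℂ))⁻¹ * s ^ (k + 1) = Complex.exp s - 1 := by
    have h0 := Summable.tsum_eq_zero_add (f := fun k : ℕ => ((Nat.factorial k : ℂ))⁻¹ * s ^ k) hc
    rw [Complex.exp_eq_exp_ℂ, exp_eq_tsum ℂ]
    simp only [smul_eq_mul]
    rw [h0]
    simp
  have hsum : Summable fun k : ℕ => ((Nat.factorial k : ℂ))⁻¹ • (s • p) ^ k :=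
    expSeries_summable' (𝕂 := ℂ) _
  simp only [exp_eq_tsum ℂ]
  rw [Summable.tsum_eq_zero_add hsum]
  have h2 : ∀ k : ℕ, ((Nat.factorial (k+1) : ℂ))⁻¹ • (s • p) ^ (k + 1)
      = (((Nat.factorial (k+1) : ℂ))⁻¹ * s ^ (k + 1)) • p := by
    intro k; rw [smul_pow, hpk, smul_smul]
  simp_rw [h2]
  rw [Summable.tsum_smul_const hc1, hes]
  simp

open NormedSpace in
lemma exp_smul_invol {N : ℕ} (P : Matrix (Fin N) (Fin N) ℂ) (hP : P * P = 1) (s : ℂ) :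
    exp (s • P) = ((Complex.exp s + Complex.exp (-s)) / 2) • 1
      + ((Complex.exp s - Complex.exp (-s)) / 2) • P := by
  set p₁ : Matrix (Fin N) (Fin N) ℂ := (2⁻¹ : ℂ) • (1 + P) with hp₁
  set p₂ : Matrix (Fin N) (Fin N) ℂ := (2⁻¹ : ℂ) • (1 - P) with hp₂
  have e11 : (1 + P) * (1 + P) = P * P + P + P + 1 := by noncomm_ring
  have e22 : (1 - P) * (1 - P) = P * P - P - P + 1 := by noncomm_ring
  have e12 : (1 + P) * (1 - P) = 1 - P * P := by noncomm_ring
  have e21 : (1 - P) * (1 + P) = 1 - P * P := by noncomm_ring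
  have h11 : p₁ * p₁ = p₁ := by
    rw [hp₁, smul_mul_assoc, mul_smul_comm, e11, hP, smul_smul]; module
  have h22 : p₂ * p₂ = p₂ := by
    rw [hp₂, smul_mul_assoc, mul_smul_comm, e22, hP, smul_smul]; module
  have h12 : p₁ * p₂ = 0 := by
    rw [hp₁, hp₂, smul_mul_assoc, mul_smul_comm, e12, hP, smul_smul]; module
  have h21 : p₂ * p₁ = 0 := by
    rw [hp₁, hp₂, smul_mul_assoc, mul_smul_comm, e21, hP, smul_smul]; module
  have hcomm : Commute p₁ p₂ := by unfold Commute SemiconjBy; rw [h12, h21]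
  have hsplit : s • P = s • p₁ + (-s) • p₂ := by rw [hp₁, hp₂]; module
  rw [hsplit, Matrix.exp_add_of_commute _ _ ((hcomm.smul_left s).smul_right (-s)),
    exp_smul_idem p₁ h11 s, exp_smul_idem p₂ h22 (-s)]
  have expand : ∀ a b : ℂ, (1 + a • p₁) * (1 + b • p₂)
      = 1 + a • p₁ + b • p₂ + (a * b) • (p₁ * p₂) := by
    intro a b
    rw [add_mul, one_mul, mul_add, mul_one, smul_mul_assoc, mul_smul_comm]
    simp only [smul_smul]
    abel
  rw [expand, h12, hp₁, hp₂]
  match_scalars <;> ring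

/-- Let `n` be a positive multiple of 4 and `M` a perfect matching of the
complete graph on `n` vertices. For `G = K_n` minus the edges of `M`, with XYZ
Hamiltonian `H(G) = (n(n-1)/2 - n/2)·I - 2·L(G)`, perfect state transfer occurs at
`t = π/4 + πk/2` between each matched pair `{i,j}`. -/
theorem complete_minus_matching_pst (n : ℕ) (hn : 0 < n) (hmod : n % 4 = 0)
    (M : (⊤ : SimpleGraph (Fin n)).Subgraph) (hM : M.IsPerfectMatching)
    (k : ℕ) (t : ℝ) (ht : t = Real.pi / 4 + Real.pi * k / 2)
    (H : Matrix (Fin n) (Fin n) ℂ)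
    (hH : H = ((n * (n - 1) / 2 - n / 2 : ℂ)) • (1 : Matrix (Fin n) (Fin n) ℂ)
        - 2 • @SimpleGraph.lapMatrix (Fin n) ℂ _
            ((⊤ : SimpleGraph (Fin n)).deleteEdges M.edgeSet) (Classical.decRel _) _ _) :
    ∀ i j : Fin n, M.Adj i j →
      ‖NormedSpace.exp ((-(Complex.I * t)) • H) i j‖ = 1 := by
  subst hH
  intro i j hij
  classical
  have huniq : ∀ v : Fin n, ∃! w, M.Adj v w :=
    SimpleGraph.Subgraph.isPerfectMatching_iff.mp hM
  set G := (⊤ : SimpleGraph (Fin n)).deleteEdges M.edgeSet with hGdef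
  have h4 : 4 ≤ n := Nat.le_of_dvd hn (Nat.dvd_of_mod_eq_zero hmod)
  set Pm : Matrix (Fin n) (Fin n) ℂ := Matrix.of (fun a b => if M.Adj a b then 1 else 0)
    with hPmdef
  set Jm : Matrix (Fin n) (Fin n) ℂ := Matrix.of (fun _ _ => 1) with hJmdef
  -- matrix identities
  have hPP : Pm * Pm = 1 := by
    ext a b
    obtain ⟨w, haw, hwu⟩ := huniq a
    have hwa : M.Adj w a := haw.symm
    rw [Matrix.mul_apply, Finset.sum_eq_single w]
    · simp only [hPmdef, Matrix.of_apply, haw, if_true, one_mul, Matrix.one_apply]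
      by_cases hab : a = b
      · subst hab; simp [hwa]
      · have hnb : ¬ M.Adj w b := fun h => hab ((huniq w).unique hwa h)
        simp [hnb, hab]
    · intro c _ hc
      have : ¬ M.Adj a c := fun h => hc (hwu c h)
      simp [hPmdef, this]
    · intro h; exact absurd (Finset.mem_univ w) h
  have rowsum : ∀ a, (∑ c, Pm a c) = (1 : ℂ) := by
    intro a
    obtain ⟨w, haw, hwu⟩ := huniq a
    rw [Finset.sum_eq_single w]
    · simp [hPmdef, haw]
    · intro c _ hc
      have : ¬ M.Adj a c := fun h => hc (hwu c h)
      simp [hPmdef, this]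
    · intro h; exact absurd (Finset.mem_univ w) h
  have colsum : ∀ b, (∑ c, Pm c b) = (1 : ℂ) := by
    intro b
    obtain ⟨w, hbw, hwu⟩ := huniq b
    rw [Finset.sum_eq_single w]
    · simp [hPmdef, hbw.symm]
    · intro c _ hc
      have : ¬ M.Adj c b := fun h => hc (hwu c h.symm)
      simp [hPmdef, this]
    · intro h; exact absurd (Finset.mem_univ w) h
  have hJP : Jm * Pm = Jm := by
    ext a b
    rw [Matrix.mul_apply]
    simp only [hJmdef, Matrix.of_apply, one_mul]
    exact colsum b
  have hPJ : Pm * Jm = Jm := by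
    ext a b
    rw [Matrix.mul_apply]
    simp only [hJmdef, Matrix.of_apply, mul_one]
    exact rowsum a
  have hJJ : Jm * Jm = (n : ℂ) • Jm := by
    ext a b
    rw [Matrix.mul_apply]
    simp [hJmdef]
  -- degree of G
  have hdeg : ∀ (v : Fin n) (inst : Fintype (G.neighborSet v)),
      @SimpleGraph.degree (Fin n) G v inst = n - 2 := by
    intro v inst
    show (@SimpleGraph.neighborFinset (Fin n) G v inst).card = n - 2
    show (@Set.toFinset _ (G.neighborSet v) inst).card = n - 2
    obtain ⟨w, hvw, hwu⟩ := huniq v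
    have hset : (@Set.toFinset _ (G.neighborSet v) inst) = Finset.univ \ {v, w} := by
      ext u
      rw [Set.mem_toFinset]
      simp only [SimpleGraph.mem_neighborSet, hGdef, SimpleGraph.deleteEdges_adj,
        SimpleGraph.top_adj, SimpleGraph.Subgraph.mem_edgeSet, Finset.mem_sdiff,
        Finset.mem_univ, true_and, Finset.mem_insert, Finset.mem_singleton]
      constructor
      · rintro ⟨hne, hnadj⟩ (h | h)
        · exact hne h.symm
        · exact hnadj (h ▸ hvw)
      · intro h
        push_neg at h
        exact ⟨fun e => h.1 e.symm, fun hadj => h.2 (hwu u hadj)⟩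
    rw [hset, Finset.card_sdiff_of_subset (Finset.subset_univ _), Finset.card_univ, Fintype.card_fin]
    have : ({v, w} : Finset (Fin n)).card = 2 := by
      rw [Finset.card_insert_of_notMem (by simp [hvw.ne]), Finset.card_singleton]
    rw [this]
  -- decomposition of the Hamiltonian
  set α : ℂ := ((n : ℂ) * ((n : ℂ) - 1) / 2 - (n : ℂ) / 2) - 2 * (n : ℂ) + 2 with hαdef
  have hHd : ((n * (n - 1) / 2 - n / 2 : ℂ)) • (1 : Matrix (Fin n) (Fin n) ℂ)
        - 2 • @SimpleGraph.lapMatrix (Fin n) ℂ _ G (Classical.decRel _) _ _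
      = α • 1 + (2 : ℂ) • Jm + (-2 : ℂ) • Pm := by
    ext a b
    simp only [SimpleGraph.lapMatrix, Matrix.sub_apply, Matrix.add_apply, Matrix.smul_apply,
      Matrix.one_apply, SimpleGraph.degMatrix, Matrix.diagonal_apply,
      SimpleGraph.adjMatrix_apply, hPmdef, hJmdef, Matrix.of_apply, smul_eq_mul]
    simp only [nsmul_eq_mul, Nat.cast_ofNat]
    by_cases hab : a = b
    · subst hab
      have hGaa : ¬ G.Adj a a := G.irrefl
      have hMaa : ¬ M.Adj a a := fun h => h.ne rfl
      simp only [eq_self_iff_true, if_true, if_neg hGaa, if_neg hMaa]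
      rw [hdeg a]
      have hcast : ((n - 2 : ℕ) : ℂ) = (n : ℂ) - 2 := by
        push_cast [Nat.cast_sub (by omega : 2 ≤ n)]; ring
      rw [hcast, hαdef]
      ring
    · have hGadj : G.Adj a b ↔ ¬ M.Adj a b := by
        rw [hGdef]
        simp [SimpleGraph.deleteEdges_adj, SimpleGraph.Subgraph.mem_edgeSet, hab]
      simp only [if_neg hab]
      by_cases hm : M.Adj a b
      · rw [if_neg (fun h => (hGadj.mp h) hm), if_pos hm]
        ring
      · rw [if_pos (hGadj.mpr hm), if_neg hm]
        ring
  rw [hHd]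
  set u : ℂ := -(Complex.I * (t : ℂ)) with hudef
  have key : u • (α • (1 : Matrix (Fin n) (Fin n) ℂ) + (2:ℂ) • Jm + (-2:ℂ) • Pm)
      = (u * α) • (1 : Matrix (Fin n) (Fin n) ℂ) + ((2*u) • Jm + (-(2*u)) • Pm) := by
    module
  rw [key]
  have cJP : Commute Jm Pm := by unfold Commute SemiconjBy; rw [hJP, hPJ]
  have c2 : Commute ((2*u) • Jm) ((-(2*u)) • Pm) := (cJP.smul_left _).smul_right _
  have c1 : Commute ((u*α) • (1 : Matrix (Fin n) (Fin n) ℂ)) ((2*u) • Jm + (-(2*u)) • Pm) :=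
    (((Commute.one_left Jm).smul_left _).smul_right _).add_right
      (((Commute.one_left Pm).smul_left _).smul_right _)
  rw [Matrix.exp_add_of_commute _ _ c1, Matrix.exp_add_of_commute _ _ c2]
  have e1 : NormedSpace.exp ((u * α) • (1 : Matrix (Fin n) (Fin n) ℂ))
      = Complex.exp (u * α) • 1 := by
    rw [exp_smul_idem 1 (one_mul 1) (u*α)]
    module
  have hn0 : (n:ℂ) ≠ 0 := Nat.cast_ne_zero.mpr hn.ne'
  have e2 : NormedSpace.exp ((2*u) • Jm) = 1 := by
    set Q : Matrix (Fin n) (Fin n) ℂ := (n:ℂ)⁻¹ • Jm with hQdef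
    have hQQ : Q * Q = Q := by
      rw [hQdef, smul_mul_assoc, mul_smul_comm, hJJ, smul_smul, smul_smul]
      congr 1
      field_simp
    have hJQ : (2*u) • Jm = (2*u*(n:ℂ)) • Q := by
      rw [hQdef, smul_smul]
      congr 1
      field_simp
    have hexp1 : Complex.exp (2*u*(n:ℂ)) = 1 := by
      obtain ⟨q, hq⟩ : 4 ∣ n := Nat.dvd_of_mod_eq_zero hmod
      have hnc : (n : ℂ) = 4 * (q : ℂ) := by exact_mod_cast hq
      have harg : 2*u*(n:ℂ) = ((-(q + 2*q*k : ℤ) : ℤ) : ℂ) * (2 * Real.pi * Complex.I) := by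
        rw [hudef, hnc, ht]
        push_cast
        ring
      rw [harg, Complex.exp_int_mul_two_pi_mul_I]
    rw [hJQ, exp_smul_idem Q hQQ, hexp1]
    simp
  rw [e1, e2, exp_smul_invol Pm hPP (-(2*u))]
  have hne' : i ≠ j := hij.ne
  simp only [neg_neg, mul_one]
  rw [smul_mul_assoc]
  simp only [Matrix.one_mul]
  simp only [Matrix.smul_apply, Matrix.add_apply, Matrix.one_apply_ne hne', hPmdef,
    Matrix.of_apply, if_pos hij, smul_eq_mul, mul_zero, zero_add, mul_one]
  rw [norm_mul, Complex.norm_exp]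
  have hre : (u * α).re = 0 := by
    have hα : α = (((n:ℝ) * ((n:ℝ) - 1) / 2 - (n:ℝ)/2 - 2*(n:ℝ) + 2 : ℝ) : ℂ) := by
      rw [hαdef]; push_cast; ring
    rw [hudef, hα]
    simp [Complex.mul_re, Complex.mul_im]
  rw [hre, Real.exp_zero, one_mul]
  have hs : (Complex.exp (-(2*u)) - Complex.exp (2*u)) / 2
      = (↑(Real.sin (2*t)) : ℂ) * Complex.I := by
    have h2 : (2*u) = -(((2*t : ℝ) : ℂ) * Complex.I) := by rw [hudef]; push_cast; ring
    have h1 : -(2*u) = ((2*t : ℝ) : ℂ) * Complex.I := by rw [h2, neg_neg]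
    rw [h1, h2]
    rw [show ∀ z : ℂ, (Complex.exp z - Complex.exp (-z))/2 = Complex.sinh z from fun z => rfl]
    rw [Complex.sinh_mul_I, Complex.ofReal_sin]
  rw [hs, norm_mul, Complex.norm_I, mul_one, Complex.norm_real, Real.norm_eq_abs]
  have h2t : 2*t = Real.pi * k + Real.pi/2 := by rw [ht]; ring
  rw [h2t, Real.sin_add_pi_div_two]
  rw [mul_comm]
  have h := Real.cos_nat_mul_pi_sub 0 k
  simp only [sub_zero, Real.cos_zero, mul_one] at h
  rw [h, abs_pow, abs_neg, abs_one, one_pow]
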